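/- Let X be a set and let 𝒟 be a finite directed family of subsets of X. Then the number of distinct traces {A ∈ 𝒟 : x ∈ A}, as x ranges over X, is at most |𝒟| + 1. -/

import Mathlib

/-- Let `X` be a set and let `𝒟` be a finite directed family of subsets of `X`.
Then the number of distinct traces `{A ∈ 𝒟 : x ∈ A}`, as `x` ranges over `X`, is at most
`|𝒟| + 1`.  A family is *directed* if any two members `A, B` satisfy `A ⊆ B`, `B ⊆ A`, or
`A ∩ B = ∅`. -/
theorem directed_family_trace_count {X : Type*} (D : Finset (Set X))
    (hdir : ∀ A ∈ D, ∀ B ∈ D, A ⊆ B ∨ B ⊆ A ∨ A ∩ B = ∅) :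
    Set.ncard {s : Set (Set X) | ∃ x : X, s = {A : Set X | A ∈ D ∧ x ∈ A}} ≤ D.card + 1 := by
  have hsub : {s : Set (Set X) | ∃ x : X, s = {A : Set X | A ∈ D ∧ x ∈ A}} ⊆
      insert (∅ : Set (Set X)) ((fun A => {B : Set X | B ∈ D ∧ A ⊆ B}) '' (D : Set (Set X))) := by
    classical
    rintro s ⟨x, rfl⟩
    by_cases hne : (D.filter (fun A => x ∈ A)).Nonempty
    · obtain ⟨A, hA, hmin⟩ : ∃ A ∈ D.filter (fun A => x ∈ A),
          ∀ B ∈ D.filter (fun A => x ∈ A), ¬ B < A := by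
        obtain ⟨A, hAm⟩ := Finset.exists_minimal hne
        exact ⟨A, hAm.prop, fun B hB => hAm.not_lt hB⟩
      simp only [Finset.mem_filter] at hA
      right
      refine ⟨A, hA.1, ?_⟩
      ext B
      simp only [Set.mem_setOf_eq]
      constructor
      · rintro ⟨hBD, hAB⟩
        exact ⟨hBD, hAB hA.2⟩
      · rintro ⟨hBD, hxB⟩
        refine ⟨hBD, ?_⟩
        rcases hdir A hA.1 B hBD with h | h | h
        · exact h
        · have hnlt : ¬ B < A := hmin B (Finset.mem_filter.mpr ⟨hBD, hxB⟩)
          have : B = A := by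
            rcases h.eq_or_ssubset with he | hs
            · exact he
            · exact absurd hs hnlt
          exact this ▸ Set.Subset.rfl
        · exact absurd (Set.mem_inter hA.2 hxB) (by simp [h])
    · left
      ext B
      simp only [Set.mem_setOf_eq, Set.mem_empty_iff_false, iff_false]
      rintro ⟨hBD, hxB⟩
      exact hne ⟨B, Finset.mem_filter.mpr ⟨hBD, hxB⟩⟩
  calc Set.ncard {s : Set (Set X) | ∃ x : X, s = {A : Set X | A ∈ D ∧ x ∈ A}}
      ≤ Set.ncard (insert (∅ : Set (Set X))
        ((fun A => {B : Set X | B ∈ D ∧ A ⊆ B}) '' (D : Set (Set X)))) := by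
        exact Set.ncard_le_ncard hsub ((Set.Finite.image _ D.finite_toSet).insert _)
    _ ≤ Set.ncard ((fun A => {B : Set X | B ∈ D ∧ A ⊆ B}) '' (D : Set (Set X))) + 1 :=
        Set.ncard_insert_le _ _
    _ ≤ D.card + 1 := by
        have := Set.ncard_image_le (f := fun A => {B : Set X | B ∈ D ∧ A ⊆ B})
          (s := (D : Set (Set X))) D.finite_toSet
        simpa using Nat.add_le_add_right this 1
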